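/- Let t₀ > 0, β > 0, p > 0 and let w : [t₀,∞) → ℝ^m be continuous. Let z : [t₀,∞) → H be such that for every t ≥ t₀, z(t) is the unique minimizer over H of u ↦ max_{i=1,…,m}(f_i(u) − w_i(t)) + (β/(2t^p))‖u‖². If z is bounded on [t₀,∞), then z is continuous on [t₀,∞). -/

import Mathlib

open Filter Topology
open scoped NNReal

set_option maxHeartbeats 1600000 in
/-- If for every `t ≥ t₀`, `z(t)` is the unique minimizer over `H` of
`u ↦ max_i (f_i(u) − w_i(t)) + (β/(2t^p))‖u‖²`, with `w` continuous on `[t₀,∞)` and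
`z` bounded there, then `z` is continuous on `[t₀,∞)`. -/
theorem stmt_7
    {H : Type*} [NormedAddCommGroup H] [InnerProductSpace ℝ H] [CompleteSpace H]
    {m : ℕ} (hm : 0 < m) (f : Fin m → H → ℝ)
    (hconv : ∀ i, ConvexOn ℝ Set.univ (f i))
    (hdiff : ∀ i, Differentiable ℝ (f i))
    (hlip : ∀ i, ∃ L : ℝ≥0, LipschitzWith L (gradient (f i)))
    (t₀ β p : ℝ) (ht₀ : 0 < t₀) (hβ : 0 < β) (hp : 0 < p)
    (w : ℝ → Fin m → ℝ) (hwcont : ContinuousOn w (Set.Ici t₀))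
    (z : ℝ → H)
    (hzmin : ∀ t, t₀ ≤ t → ∀ u : H,
      (⨆ i, (f i (z t) - w t i)) + β / (2 * t ^ p) * ‖z t‖ ^ 2 ≤
        (⨆ i, (f i u - w t i)) + β / (2 * t ^ p) * ‖u‖ ^ 2)
    (hzuniq : ∀ t, t₀ ≤ t → ∀ u : H,
      (∀ v : H, (⨆ i, (f i u - w t i)) + β / (2 * t ^ p) * ‖u‖ ^ 2 ≤
        (⨆ i, (f i v - w t i)) + β / (2 * t ^ p) * ‖v‖ ^ 2) → u = z t)
    (hbdd : ∃ M : ℝ, ∀ t, t₀ ≤ t → ‖z t‖ ≤ M) :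
    ContinuousOn z (Set.Ici t₀) := by
  obtain ⟨M₀, hM₀⟩ := hbdd
  set M : ℝ := max M₀ 0 with hM
  have hMnn : 0 ≤ M := le_max_right _ _
  have hMb : ∀ t, t₀ ≤ t → ‖z t‖ ≤ M := fun t ht => (hM₀ t ht).trans (le_max_left _ _)
  haveI : Nonempty (Fin m) := ⟨⟨0, hm⟩⟩
  have bdd : ∀ (g : Fin m → ℝ), BddAbove (Set.range g) := fun g => (Set.finite_range g).bddAbove
  -- key quadratic growth from strong convexity
  have key : ∀ t, t₀ ≤ t → ∀ u : H,
      β / (4 * t ^ p) * ‖u - z t‖ ^ 2 ≤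
        ((⨆ i, (f i u - w t i)) + β / (2 * t ^ p) * ‖u‖ ^ 2)
        - ((⨆ i, (f i (z t) - w t i)) + β / (2 * t ^ p) * ‖z t‖ ^ 2) := by
    intro t ht u
    set v := z t with hv
    set mid : H := (1/2 : ℝ) • u + (1/2 : ℝ) • v with hmid
    have hgmid : (⨆ i, (f i mid - w t i)) ≤
        ((⨆ i, (f i u - w t i)) + (⨆ i, (f i v - w t i))) / 2 := by
      apply ciSup_le
      intro i
      have h1 := (hconv i).2 (Set.mem_univ u) (Set.mem_univ v)
        (by norm_num : (0:ℝ) ≤ 1/2) (by norm_num : (0:ℝ) ≤ 1/2) (by norm_num)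
      have h2 : f i u - w t i ≤ ⨆ j, (f j u - w t j) := le_ciSup (f := fun j => f j u - w t j) (bdd _) i
      have h3 : f i v - w t i ≤ ⨆ j, (f j v - w t j) := le_ciSup (f := fun j => f j v - w t j) (bdd _) i
      simp only [smul_eq_mul] at h1
      linarith
    have hnorm : ‖mid‖ ^ 2 = (2*‖u‖^2 + 2*‖v‖^2 - ‖u - v‖^2) / 4 := by
      have hpar := parallelogram_law_with_norm ℝ u v
      have hm2 : mid = (1/2 : ℝ) • (u + v) := by rw [hmid, smul_add]
      rw [hm2, norm_smul]
      simp only [Real.norm_eq_abs]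
      rw [abs_of_nonneg (by norm_num : (0:ℝ) ≤ 1/2)]
      nlinarith [hpar, norm_nonneg (u + v)]
    have hmin := hzmin t ht mid
    rw [hnorm] at hmin
    have hpt : 0 < t ^ p := Real.rpow_pos_of_pos (lt_of_lt_of_le ht₀ ht) p
    have hc : 0 < β / (2 * t ^ p) := by positivity
    rw [show β / (4 * t ^ p) = β / (2 * t ^ p) / 2 by ring]
    nlinarith [hgmid, hmin]
  -- perturbation bound for the sup term
  have sup_pert : ∀ (u : H) (a b : Fin m → ℝ),
      (⨆ i, (f i u - a i)) ≤ (⨆ i, (f i u - b i)) + ∑ i, |a i - b i| := by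
    intro u a b
    apply ciSup_le
    intro i
    have h1 : f i u - b i ≤ ⨆ j, (f j u - b j) := le_ciSup (f := fun j => f j u - b j) (bdd _) i
    have h2 : |a i - b i| ≤ ∑ j, |a j - b j| :=
      Finset.single_le_sum (f := fun j => |a j - b j|) (fun j _ => abs_nonneg _)
        (Finset.mem_univ i)
    have h3 : b i - a i ≤ |a i - b i| := by rw [abs_sub_comm]; exact le_abs_self _
    linarith
  intro t ht
  have ht' : t₀ ≤ t := ht
  have htpos : 0 < t := lt_of_lt_of_le ht₀ ht'
  have htp : 0 < t ^ p := Real.rpow_pos_of_pos htpos p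
  set E : ℝ → ℝ := fun s => ∑ i, |w t i - w s i| with hE
  -- main quantitative bound
  have bound : ∀ s, t₀ ≤ s →
      β / (4 * t ^ p) * ‖z s - z t‖ ^ 2 ≤
        2 * E s + |β / (2 * t ^ p) - β / (2 * s ^ p)| * M ^ 2 := by
    intro s hs
    have hsp : 0 < s ^ p := Real.rpow_pos_of_pos (lt_of_lt_of_le ht₀ hs) p
    have k1 := key t ht' (z s)
    have k2 := key s hs (z t)
    have h0 : 0 ≤ β / (4 * s ^ p) * ‖z t - z s‖ ^ 2 := by positivity
    have e1 := sup_pert (z s) (w t) (w s)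
    have e2 := sup_pert (z t) (w s) (w t)
    have esum : ∑ i, |w s i - w t i| = E s := by
      rw [hE]
      exact Finset.sum_congr rfl (fun i _ => abs_sub_comm _ _)
    rw [esum] at e2
    have ha : ‖z s‖ ^ 2 ≤ M ^ 2 := by
      have := hMb s hs
      nlinarith [norm_nonneg (z s)]
    have hb : ‖z t‖ ^ 2 ≤ M ^ 2 := by
      have := hMb t ht'
      nlinarith [norm_nonneg (z t)]
    have ha0 : 0 ≤ ‖z s‖ ^ 2 := by positivity
    have hb0 : 0 ≤ ‖z t‖ ^ 2 := by positivity
    have hcoef : (β / (2 * t ^ p) - β / (2 * s ^ p)) * (‖z s‖ ^ 2 - ‖z t‖ ^ 2) ≤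
        |β / (2 * t ^ p) - β / (2 * s ^ p)| * M ^ 2 := by
      calc (β / (2 * t ^ p) - β / (2 * s ^ p)) * (‖z s‖ ^ 2 - ‖z t‖ ^ 2)
          ≤ |(β / (2 * t ^ p) - β / (2 * s ^ p)) * (‖z s‖ ^ 2 - ‖z t‖ ^ 2)| := le_abs_self _
        _ = |β / (2 * t ^ p) - β / (2 * s ^ p)| * |‖z s‖ ^ 2 - ‖z t‖ ^ 2| := abs_mul _ _
        _ ≤ |β / (2 * t ^ p) - β / (2 * s ^ p)| * M ^ 2 := by
            apply mul_le_mul_of_nonneg_left _ (abs_nonneg _)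
            rw [abs_le]
            constructor <;> linarith
    have hcoef' : β / (2 * t ^ p) * ‖z s‖ ^ 2 - β / (2 * s ^ p) * ‖z s‖ ^ 2
        - β / (2 * t ^ p) * ‖z t‖ ^ 2 + β / (2 * s ^ p) * ‖z t‖ ^ 2 ≤
        |β / (2 * t ^ p) - β / (2 * s ^ p)| * M ^ 2 := by nlinarith [hcoef]
    linarith [k1, k2, h0, e1, e2, hcoef']
  -- limits
  have hstend : Tendsto (fun s : ℝ => β / (2 * s ^ p)) (𝓝[Set.Ici t₀] t)
      (𝓝 (β / (2 * t ^ p))) := by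
    have hcont : ContinuousAt (fun s : ℝ => s ^ p) t :=
      Real.continuousAt_rpow_const t p (Or.inl htpos.ne')
    exact (tendsto_const_nhds.div ((hcont.tendsto.const_mul 2).mono_left nhdsWithin_le_nhds)
      (by positivity))
  have habs : Tendsto (fun s : ℝ => |β / (2 * t ^ p) - β / (2 * s ^ p)|)
      (𝓝[Set.Ici t₀] t) (𝓝 0) := by
    have h1 : Tendsto (fun s : ℝ => β / (2 * t ^ p) - β / (2 * s ^ p)) (𝓝[Set.Ici t₀] t)
        (𝓝 (β / (2 * t ^ p) - β / (2 * t ^ p))) := tendsto_const_nhds.sub hstend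
    simpa using h1.abs
  have hEt : Tendsto E (𝓝[Set.Ici t₀] t) (𝓝 0) := by
    have hsum : Tendsto (fun s => ∑ i : Fin m, |w t i - w s i|) (𝓝[Set.Ici t₀] t)
        (𝓝 (∑ i : Fin m, (0:ℝ))) := by
      apply tendsto_finset_sum
      intro i _
      have hwi : Tendsto (fun s => w s i) (𝓝[Set.Ici t₀] t) (𝓝 (w t i)) :=
        ((continuous_apply i).continuousAt.tendsto).comp (hwcont t ht)
      have h2 : Tendsto (fun s => w t i - w s i) (𝓝[Set.Ici t₀] t)
          (𝓝 (w t i - w t i)) := tendsto_const_nhds.sub hwi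
      simpa using h2.abs
    simpa using hsum
  have hBtend : Tendsto (fun s => (4 * t ^ p / β) *
      (2 * E s + |β / (2 * t ^ p) - β / (2 * s ^ p)| * M ^ 2)) (𝓝[Set.Ici t₀] t) (𝓝 0) := by
    have := ((hEt.const_mul 2).add (habs.mul_const (M ^ 2))).const_mul (4 * t ^ p / β)
    simpa using this
  have hsq : Tendsto (fun s => ‖z s - z t‖ ^ 2) (𝓝[Set.Ici t₀] t) (𝓝 0) := by
    apply squeeze_zero' (.of_forall (fun s => by positivity))
    · filter_upwards [self_mem_nhdsWithin] with s hs
      have h := bound s hs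
      have hbne : β ≠ 0 := hβ.ne'
      have htpne : t ^ p ≠ 0 := htp.ne'
      calc ‖z s - z t‖ ^ 2
          = (4 * t ^ p / β) * (β / (4 * t ^ p) * ‖z s - z t‖ ^ 2) := by
            field_simp
        _ ≤ (4 * t ^ p / β) * (2 * E s + |β / (2 * t ^ p) - β / (2 * s ^ p)| * M ^ 2) := by
            apply mul_le_mul_of_nonneg_left h (by positivity)
    · exact hBtend
  have hnt : Tendsto (fun s => ‖z s - z t‖) (𝓝[Set.Ici t₀] t) (𝓝 0) := by
    have := (Real.continuous_sqrt.tendsto 0).comp hsq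
    rw [Real.sqrt_zero] at this
    exact this.congr (fun s => Real.sqrt_sq (norm_nonneg _))
  show Tendsto z (𝓝[Set.Ici t₀] t) (𝓝 (z t))
  rw [tendsto_iff_norm_sub_tendsto_zero]
  exact hnt
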